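/- Let Γ₀, δ, Γ, K_Γ and τ be as in the context. Then for every integer n ≥ 2 the polynomial X^{n−1} − τ (that is, X^{n−1} − C τ, where C is the constant-coefficient embedding) is irreducible in the polynomial ring K_Γ[X]. -/

import Mathlib

open Polynomial HahnSeries

/-- Key arithmetic fact: for `0 ≤ i, j < m` with `i ≠ j`, the real number
`(j - i) * (δ / m)` does not lie in `Γ₀ + ℤδ`. -/
lemma key_not_mem (Γ₀ : AddSubgroup ℝ) (δ : ℝ)
    (hind : δ ∉ Submodule.span ℚ (Γ₀ : Set ℝ)) {m i j : ℕ}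
    (hi : i < m) (hj : j < m) (hne : i ≠ j)
    (h : ((j : ℝ) - i) * (δ / m) ∈ (Γ₀ ⊔ AddSubgroup.zmultiples δ : AddSubgroup ℝ)) :
    False := by
  have hm0 : (m : ℝ) ≠ 0 := Nat.cast_ne_zero.2 (by omega)
  rw [AddSubgroup.mem_sup] at h
  obtain ⟨g, hg, z, hz, hgz⟩ := h
  rw [AddSubgroup.mem_zmultiples_iff] at hz
  obtain ⟨k, rfl⟩ := hz
  -- (j - i - k*m) * δ = m * g
  have hmain : (((j : ℤ) - i - k * m : ℤ) : ℝ) * δ = (m : ℝ) * g := by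
    have := hgz
    field_simp at this ⊢
    push_cast; rw [zsmul_eq_mul] at this; linarith [this]
  set c : ℤ := (j : ℤ) - i - k * m with hc
  have hcne : c ≠ 0 := by
    intro h0
    have heq : (j : ℤ) - i = k * m := by omega
    have hdvd : (m : ℤ) ∣ (j : ℤ) - i := ⟨k, by linarith [heq]⟩
    have habs : ((j : ℤ) - i).natAbs < (m : ℤ).natAbs := by omega
    have := Int.eq_zero_of_dvd_of_natAbs_lt_natAbs hdvd habs
    omega
  apply hind
  have hδ : δ = (((m : ℚ) / (c : ℚ)) : ℚ) • g := by
    have hcr : (c : ℝ) ≠ 0 := Int.cast_ne_zero.2 hcne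
    rw [Rat.smul_def]
    push_cast
    field_simp
    linarith [hmain]
  rw [hδ]
  exact Submodule.smul_mem _ _ (Submodule.subset_span hg)

/-- The polynomial `X^(n-1) - τ` is irreducible over the Novikov field
`K_Γ = HahnSeries Γ ℚ`, where `Γ = Γ₀ + ℤδ` with `δ > 0` a real number that is
ℚ-linearly independent from `Γ₀`, and `τ = single δ 1` is the monomial `t^{-δ}`.
(Used in the proof of Lemma 2.3 of the paper.) -/
theorem X_pow_sub_tau_irreducible
    (Γ₀ : AddSubgroup ℝ) (δ : ℝ) (hδ : 0 < δ)
    (hind : δ ∉ Submodule.span ℚ (Γ₀ : Set ℝ))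
    (n : ℕ) (hn : 2 ≤ n) :
    Irreducible
      (Polynomial.X ^ (n - 1) -
        Polynomial.C (HahnSeries.single
          (⟨δ, (le_sup_right : AddSubgroup.zmultiples δ ≤ Γ₀ ⊔ AddSubgroup.zmultiples δ)
              (AddSubgroup.mem_zmultiples δ)⟩ : ↥(Γ₀ ⊔ AddSubgroup.zmultiples δ))
          (1 : ℚ))) := by
  set Γ : AddSubgroup ℝ := Γ₀ ⊔ AddSubgroup.zmultiples δ with hΓ
  set m : ℕ := n - 1 with hmdef
  have hm : 1 ≤ m := by omega
  have hm0 : m ≠ 0 := by omega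
  have hmr : (m : ℝ) ≠ 0 := Nat.cast_ne_zero.2 hm0
  set δΓ : Γ := ⟨δ, (le_sup_right : AddSubgroup.zmultiples δ ≤ Γ)
      (AddSubgroup.mem_zmultiples δ)⟩ with hδΓ
  set τ : HahnSeries Γ ℚ := HahnSeries.single δΓ (1 : ℚ) with hτ
  -- the embedding
  set femb : Γ ↪o ℝ := ⟨⟨fun x => (x : ℝ), Subtype.coe_injective⟩, Iff.rfl⟩ with hfemb
  set φ : HahnSeries Γ ℚ →+* HahnSeries ℝ ℚ :=
    { toFun := HahnSeries.embDomain femb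
      map_one' := HahnSeries.embDomain_one femb rfl
      map_mul' := HahnSeries.embDomain_mul _ (fun _ _ => rfl)
      map_zero' := HahnSeries.embDomain_zero
      map_add' := HahnSeries.embDomain_add _ } with hφ
  letI : Algebra (HahnSeries Γ ℚ) (HahnSeries ℝ ℚ) := φ.toAlgebra
  have halg : (algebraMap (HahnSeries Γ ℚ) (HahnSeries ℝ ℚ)) = φ := rfl
  have hφapp : ∀ c : HahnSeries Γ ℚ, φ c = HahnSeries.embDomain femb c := fun _ => rfl
  set σ : HahnSeries ℝ ℚ := HahnSeries.single (δ / m) (1 : ℚ) with hσ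
  have hσpow : ∀ i : ℕ, σ ^ i = HahnSeries.single ((i : ℝ) * (δ / m)) (1 : ℚ) := by
    intro i
    rw [hσ, HahnSeries.single_pow, one_pow, nsmul_eq_mul]
  have hσm : σ ^ m = φ τ := by
    have hmd : (m : ℝ) * (δ / m) = δ := by field_simp
    rw [hσpow, hτ, hφapp, HahnSeries.embDomain_single, hmd]
    rfl
  -- the key linear independence claim
  have claim : ∀ f : Polynomial (HahnSeries Γ ℚ),
      f.natDegree < m → Polynomial.aeval σ f = 0 → f = 0 := by
    intro f hdf hf
    by_contra hf0
    set j : ℕ := f.natDegree with hj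
    have hcj : f.coeff j ≠ 0 := Polynomial.leadingCoeff_ne_zero.2 hf0
    obtain ⟨γ, hγ⟩ := HahnSeries.support_nonempty_iff.2 hcj
    set x : ℝ := (γ : ℝ) + (j : ℝ) * (δ / m) with hx
    rw [Polynomial.aeval_eq_sum_range' hdf] at hf
    have hcoeff : ∑ i ∈ Finset.range m, ((f.coeff i • σ ^ i).coeff x) = 0 := by
      let ev : HahnSeries ℝ ℚ →+ ℚ :=
        { toFun := fun y => y.coeff x
          map_zero' := rfl
          map_add' := fun a b => rfl }
      have := congrArg ev hf
      rw [map_sum] at this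
      simpa [ev] using this
    have hterm : ∀ i ∈ Finset.range m,
        (f.coeff i • σ ^ i).coeff x = (HahnSeries.embDomain femb (f.coeff i)).coeff
          ((γ : ℝ) + ((j : ℝ) - i) * (δ / m)) := by
      intro i _
      rw [Algebra.smul_def, halg, hσpow, hφapp]
      have hxe : x = ((γ : ℝ) + ((j : ℝ) - i) * (δ / m)) + (i : ℝ) * (δ / m) := by
        rw [hx]; ring
      rw [hxe, HahnSeries.coeff_mul_single_add, mul_one]
    rw [Finset.sum_congr rfl hterm] at hcoeff
    rw [Finset.sum_eq_single j] at hcoeff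
    · apply hγ
      have : ((γ : ℝ) + ((j : ℝ) - j) * (δ / m)) = femb γ := by
        show _ = (γ : ℝ); ring
      rw [this, HahnSeries.embDomain_coeff] at hcoeff
      exact hcoeff
    · intro i hi hij
      apply HahnSeries.embDomain_notin_range
      rintro ⟨γ', hγ'⟩
      have hmem : ((j : ℝ) - i) * (δ / m) ∈ Γ := by
        have : ((j : ℝ) - i) * (δ / m) = (γ' : ℝ) - (γ : ℝ) := by
          have : (γ' : ℝ) = (γ : ℝ) + ((j : ℝ) - i) * (δ / m) := hγ'
          linarith
        rw [this]
        exact sub_mem γ'.2 γ.2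
      exact key_not_mem Γ₀ δ hind (Finset.mem_range.1 hi) (by omega) hij hmem
    · intro hjm
      exact absurd (Finset.mem_range.2 (by omega)) hjm
  -- σ is a root of X^m - C τ, which is monic of degree m
  set P : Polynomial (HahnSeries Γ ℚ) := Polynomial.X ^ m - Polynomial.C τ with hP
  have hProot : Polynomial.aeval σ P = 0 := by
    rw [hP, Polynomial.aeval_def, Polynomial.eval₂_sub, Polynomial.eval₂_C,
      Polynomial.eval₂_X_pow, halg, ← hσm, sub_self]
  have hPmonic : P.Monic := Polynomial.monic_X_pow_sub_C τ hm0
  have hint : IsIntegral (HahnSeries Γ ℚ) σ := ⟨P, hPmonic, hProot⟩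
  have hPdeg : P.natDegree = m := by
    rw [hP]; exact Polynomial.natDegree_X_pow_sub_C
  set q : Polynomial (HahnSeries Γ ℚ) := minpoly (HahnSeries Γ ℚ) σ with hq
  have hqdvd : q ∣ P := minpoly.dvd (HahnSeries Γ ℚ) σ hProot
  have hqmonic : q.Monic := minpoly.monic hint
  have hqdeg : q.natDegree = m := by
    by_contra hne
    have hle : q.natDegree ≤ m := hPdeg ▸ Polynomial.natDegree_le_of_dvd hqdvd
      (hPmonic.ne_zero)
    have hlt : q.natDegree < m := lt_of_le_of_ne hle hne
    exact minpoly.ne_zero hint (claim q hlt (minpoly.aeval (HahnSeries Γ ℚ) σ))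
  have hPq : P = q := by
    have hd : q ∣ P - q := (dvd_sub hqdvd dvd_rfl)
    by_contra hne
    have hsub : P - q ≠ 0 := sub_ne_zero.2 hne
    have hdeglt : (P - q).degree < q.degree := by
      have h1 : P.degree = q.degree := by
        rw [Polynomial.degree_eq_natDegree hPmonic.ne_zero,
          Polynomial.degree_eq_natDegree hqmonic.ne_zero, hPdeg, hqdeg]
      have := Polynomial.degree_sub_lt h1 hPmonic.ne_zero
        (by rw [hPmonic.leadingCoeff, hqmonic.leadingCoeff])
      rwa [h1] at this
    exact hsub (Polynomial.eq_zero_of_dvd_of_degree_lt hd hdeglt)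
  show Irreducible P
  rw [hPq]
  exact minpoly.irreducible hint
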